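/- For the BN parameterization with t(u)=6u^2+1, the group order polynomial r(u)=36u^4+36u^3+18u^2+6u+1 divides the evaluation Φ_12(t(u)-1) of the 12th cyclotomic polynomial, as polynomials in ℤ[u]. -/
import Mathlib

open Polynomial

lemma cyclotomic6 : cyclotomic 6 ℤ = X ^ 2 - X + 1 := by
  have h := cyclotomic_expand_eq_cyclotomic_mul (p := 2) (n := 3) Nat.prime_two
    (by norm_num) ℤ
  rw [cyclotomic_three] at h
  have h2 : (X ^ 2 - X + 1 : ℤ[X]) * cyclotomic 3 ℤ =
      cyclotomic 6 ℤ * cyclotomic 3 ℤ := by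
    rw [cyclotomic_three]
    rw [show (3 * 2 : ℕ) = 6 from rfl] at h
    rw [← h]
    simp [map_add, map_pow, map_mul, expand_X, map_one]
    ring
  have h3 : cyclotomic 3 ℤ ≠ 0 := cyclotomic_ne_zero 3 ℤ
  exact (mul_right_cancel₀ h3 h2).symm ▸ rfl

lemma cyclotomic12 : cyclotomic 12 ℤ = X ^ 4 - X ^ 2 + 1 := by
  have h := cyclotomic_expand_eq_cyclotomic (p := 2) (n := 6) Nat.prime_two
    (by norm_num) ℤ
  rw [cyclotomic6] at h
  rw [show (12 : ℕ) = 2 * 6 from rfl, ← h]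
  simp [map_add, map_pow, map_mul, expand_X, map_one]
  ring

/-- The BN group-order polynomial r(u) divides Φ₁₂(t(u) - 1) in ℤ[u],
    where t(u) = 6u² + 1. -/
theorem bn_order_divides_cyclotomic :
    (36 * X ^ 4 + 36 * X ^ 3 + 18 * X ^ 2 + 6 * X + 1 : Polynomial ℤ) ∣
      (cyclotomic 12 ℤ).comp ((6 * X ^ 2 + 1) - 1) := by
  refine ⟨36 * X ^ 4 - 36 * X ^ 3 + 18 * X ^ 2 - 6 * X + 1, ?_⟩
  rw [cyclotomic12]
  simp only [sub_comp, add_comp, pow_comp, mul_comp, X_comp, one_comp, ofNat_comp]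
  ring
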